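/- For all f ≥ 1, the triple-spend window is nonempty under the winner-consensus constraint in the sense that ⌈(7f+2)/2⌉ ≤ ⌊(11f+2)/3⌋ holds for all f ≥ 4, and the quadruple-spend threshold exceeds the winner-consensus limit: ⌈(11f+3)/3⌉ > ⌊(11f+2)/3⌋ for all f ≥ 1. -/
import Mathlib

/-- The triple-spend window is nonempty for f ≥ 4: ⌈(7f+2)/2⌉ ≤ ⌊(11f+2)/3⌋;
and the quadruple-spend threshold exceeds the winner-consensus limit for all
f ≥ 1: ⌈(11f+3)/3⌉ > ⌊(11f+2)/3⌋. -/
theorem stmt8 :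
    (∀ f : ℕ, 4 ≤ f → ⌈((7 * f + 2 : ℚ)) / 2⌉ ≤ ⌊((11 * f + 2 : ℚ)) / 3⌋) ∧
    (∀ f : ℕ, 1 ≤ f → ⌈((11 * f + 3 : ℚ)) / 3⌉ > ⌊((11 * f + 2 : ℚ)) / 3⌋) := by
  have key : ∀ (n : ℤ) (d : ℕ), ⌈((n : ℚ)) / d⌉ = -((-n) / d) := by
    intro n d
    rw [← neg_neg ⌈(_ : ℚ)/_⌉, ← Int.floor_neg, ← neg_div, ← Int.cast_neg,
      Rat.floor_intCast_div_natCast]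
  constructor
  · intro f hf
    have h1 : ((7 * f + 2 : ℚ)) / 2 = ((7 * (f : ℤ) + 2 : ℤ) : ℚ) / (2 : ℕ) := by push_cast; ring
    have h2 : ((11 * f + 2 : ℚ)) / 3 = ((11 * (f : ℤ) + 2 : ℤ) : ℚ) / (3 : ℕ) := by push_cast; ring
    rw [h1, h2, key, Rat.floor_intCast_div_natCast]
    omega
  · intro f hf
    have h1 : ((11 * f + 3 : ℚ)) / 3 = ((11 * (f : ℤ) + 3 : ℤ) : ℚ) / (3 : ℕ) := by push_cast; ring
    have h2 : ((11 * f + 2 : ℚ)) / 3 = ((11 * (f : ℤ) + 2 : ℤ) : ℚ) / (3 : ℕ) := by push_cast; ring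
    rw [h1, h2, key, Rat.floor_intCast_div_natCast]
    omega
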